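/- Let A ∈ M_k ⊗ M_m be positive semidefinite Hermitian with Hermitian Schmidt decomposition Σ_{i=1}^n λ_i γ_i ⊗ δ_i where λ_1 = ... = λ_s > λ_{s+1} ≥ ... ≥ λ_n > 0. Then D = Σ_{i=1}^s γ_i ⊗ δ_i is a positive semidefinite Hermitian matrix. -/

import Mathlib

open Matrix Kronecker ComplexOrder

section Aux

lemma collapseL15 {α β γ' : Type*} [Fintype α] [Fintype β] [Fintype γ'] [DecidableEq γ']
    (e : α → β → γ') (g : γ' → ℂ) :
    ∑ r, (∑ p, ∑ v, if r = e p v then (1:ℂ) else 0) * g r = ∑ p, ∑ v, g (e p v) := by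
  simp only [Finset.sum_mul]
  rw [Finset.sum_comm]
  refine Finset.sum_congr rfl fun p _ => ?_
  rw [Finset.sum_comm]
  refine Finset.sum_congr rfl fun v _ => ?_
  simp [ite_mul]

lemma collapseR15 {α β γ' : Type*} [Fintype α] [Fintype β] [Fintype γ'] [DecidableEq γ']
    (e : α → β → γ') (g : γ' → ℂ) :
    ∑ c, g c * (∑ p, ∑ v, if c = e p v then (1:ℂ) else 0) = ∑ p, ∑ v, g (e p v) := by
  simp only [Finset.mul_sum]
  rw [Finset.sum_comm]
  refine Finset.sum_congr rfl fun p _ => ?_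
  rw [Finset.sum_comm]
  refine Finset.sum_congr rfl fun v _ => ?_
  simp [mul_ite]

lemma sum_swap4_15 {α β χ ψ : Type*} [Fintype α] [Fintype β] [Fintype χ] [Fintype ψ]
    (f : α → β → χ → ψ → ℂ) :
    (∑ a, ∑ b, ∑ c, ∑ d, f a b c d) = ∑ c, ∑ d, ∑ a, ∑ b, f a b c d :=
  calc (∑ a, ∑ b, ∑ c, ∑ d, f a b c d)
      = ∑ a, ∑ c, ∑ b, ∑ d, f a b c d :=
        Finset.sum_congr rfl fun _ _ => Finset.sum_comm
    _ = ∑ c, ∑ a, ∑ d, ∑ b, f a b c d := by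
        rw [Finset.sum_comm]
        exact Finset.sum_congr rfl fun _ _ => Finset.sum_congr rfl fun _ _ => Finset.sum_comm
    _ = ∑ c, ∑ d, ∑ a, ∑ b, f a b c d :=
        Finset.sum_congr rfl fun _ _ => Finset.sum_comm

lemma kronecker_conjTranspose15 {α β : Type*} [Fintype α] [Fintype β]
    [DecidableEq α] [DecidableEq β] (B : Matrix α α ℂ)
    (D : Matrix β β ℂ) : (B ⊗ₖ D)ᴴ = Bᴴ ⊗ₖ Dᴴ := by
  ext ⟨i,j⟩ ⟨p,q⟩
  simp [conjTranspose_apply, kroneckerMap_apply, mul_comm]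

lemma kronecker_posSemidef15 {α β : Type*} [Fintype α] [Fintype β]
    [DecidableEq α] [DecidableEq β] {B : Matrix α α ℂ}
    {D : Matrix β β ℂ} (hB : B.PosSemidef) (hD : D.PosSemidef) :
    (B ⊗ₖ D).PosSemidef := by
  exact hB.kronecker hD

noncomputable def Cmap15 {k m : ℕ} (A B : Matrix (Fin k × Fin m) (Fin k × Fin m) ℂ) :
    Matrix (Fin k × Fin m) (Fin k × Fin m) ℂ :=
  fun x y => ∑ p, ∑ q, B (x.1, p) (y.1, q) *
    (∑ u, ∑ v, A (u, q) (v, p) * A (v, x.2) (u, y.2))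

noncomputable def Pmat15 (k m : ℕ) :
    Matrix ((Fin k × Fin m) × (Fin k × Fin m) × (Fin k × Fin m)) (Fin k × Fin m) ℂ :=
  fun r x => ∑ p : Fin m, ∑ v : Fin k,
    if r = ((x.1, p), ((v, p), (v, x.2))) then (1:ℂ) else 0

lemma star_Pmat15 {k m : ℕ} (r : (Fin k × Fin m) × (Fin k × Fin m) × (Fin k × Fin m))
    (x : Fin k × Fin m) : star (Pmat15 k m r x) = Pmat15 k m r x := by
  simp only [Pmat15, star_sum]
  refine Finset.sum_congr rfl fun p _ => Finset.sum_congr rfl fun v _ => ?_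
  split <;> simp

theorem cmap_eq15 {k m : ℕ} (A B : Matrix (Fin k × Fin m) (Fin k × Fin m) ℂ) :
    Cmap15 A B = (Pmat15 k m)ᴴ * (B ⊗ₖ (Aᵀ ⊗ₖ A)) * (Pmat15 k m) := by
  ext x y
  rw [Matrix.mul_apply]
  calc Cmap15 A B x y
      = ∑ q, ∑ u, ∑ p, ∑ v,
          (B ⊗ₖ (Aᵀ ⊗ₖ A)) ((x.1, p), ((v, p), (v, x.2))) ((y.1, q), ((u, q), (u, y.2))) := by
        simp only [Cmap15, kroneckerMap_apply, transpose_apply, Finset.mul_sum]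
        rw [Finset.sum_comm]
        exact Finset.sum_congr rfl fun q _ => Finset.sum_comm
    _ = ∑ c, (∑ p, ∑ v,
          (B ⊗ₖ (Aᵀ ⊗ₖ A)) ((x.1, p), ((v, p), (v, x.2))) c) * Pmat15 k m c y := by
        simp only [Pmat15]
        rw [collapseR15]
    _ = ∑ c, ((Pmat15 k m)ᴴ * (B ⊗ₖ (Aᵀ ⊗ₖ A))) x c * Pmat15 k m c y := by
        refine Finset.sum_congr rfl fun c _ => ?_
        congr 1
        simp only [Matrix.mul_apply, conjTranspose_apply, star_Pmat15]
        rw [← collapseL15 (fun (p : Fin m) (v : Fin k) => ((x.1, p), ((v, p), (v, x.2))))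
          (g := fun r => (B ⊗ₖ (Aᵀ ⊗ₖ A)) r c)]
        simp only [Pmat15]

set_option maxHeartbeats 1000000 in
lemma cmap_posSemidef15 {k m : ℕ} {A B : Matrix (Fin k × Fin m) (Fin k × Fin m) ℂ}
    (hA : A.PosSemidef) (hB : B.PosSemidef) : (Cmap15 A B).PosSemidef := by
  rw [cmap_eq15]
  have h1 : (B ⊗ₖ (Aᵀ ⊗ₖ A)).PosSemidef :=
    kronecker_posSemidef15 hB (kronecker_posSemidef15 hA.transpose hA)
  exact h1.conjTranspose_mul_mul_same (Pmat15 k m)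

lemma tr_pair15 {n a : ℕ} (ε : Fin n → Matrix (Fin a) (Fin a) ℂ)
    (hε : ∀ i, (ε i).IsHermitian)
    (hoε : ∀ i j, Matrix.trace (ε i * (ε j)ᴴ) = if i = j then 1 else 0)
    (i j : Fin n) : (∑ p, ∑ q, ε i p q * ε j q p) = if i = j then 1 else 0 := by
  have h := hoε i j
  rw [(hε j).eq] at h
  simpa [Matrix.trace, Matrix.diag, Matrix.mul_apply] using h

lemma cmap_eigen15 {k m n : ℕ} (A : Matrix (Fin k × Fin m) (Fin k × Fin m) ℂ)
    (lam : Fin n → ℝ) (γ : Fin n → Matrix (Fin k) (Fin k) ℂ)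
    (δ : Fin n → Matrix (Fin m) (Fin m) ℂ)
    (hγ : ∀ i, (γ i).IsHermitian) (hδ : ∀ i, (δ i).IsHermitian)
    (hoγ : ∀ i j, Matrix.trace (γ i * (γ j)ᴴ) = if i = j then 1 else 0)
    (hoδ : ∀ i j, Matrix.trace (δ i * (δ j)ᴴ) = if i = j then 1 else 0)
    (hdec : A = ∑ i, (lam i : ℂ) • (γ i ⊗ₖ δ i)) (i : Fin n) :
    Cmap15 A (γ i ⊗ₖ δ i) = ((lam i : ℂ))^2 • (γ i ⊗ₖ δ i) := by
  have hF : ∀ (q p : Fin m) (r t : Fin m),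
      (∑ u, ∑ v, A (u, q) (v, p) * A (v, r) (u, t))
        = ∑ j, ((lam j : ℂ))^2 * (δ j q p * δ j r t) := by
    intro q p r t
    rw [hdec]
    simp only [Matrix.sum_apply, Matrix.smul_apply, kroneckerMap_apply, smul_eq_mul]
    rw [show (∑ u, ∑ v, (∑ j, (lam j : ℂ) * (γ j u v * δ j q p)) *
          (∑ l, (lam l : ℂ) * (γ l v u * δ l r t))) =
        ∑ u, ∑ v, ∑ j, ∑ l, ((lam j : ℂ) * (γ j u v * δ j q p)) *
          ((lam l : ℂ) * (γ l v u * δ l r t)) from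
      Finset.sum_congr rfl fun u _ => Finset.sum_congr rfl fun v _ => Finset.sum_mul_sum _ _ _ _]
    rw [sum_swap4_15]
    refine Finset.sum_congr rfl fun j _ => ?_
    have step : ∀ l : Fin n, (∑ u, ∑ v, ((lam j : ℂ) * (γ j u v * δ j q p)) *
        ((lam l : ℂ) * (γ l v u * δ l r t)))
        = ((lam j : ℂ) * (lam l : ℂ) * (δ j q p * δ l r t)) * ∑ u, ∑ v, γ j u v * γ l v u := by
      intro l
      simp only [Finset.mul_sum]
      exact Finset.sum_congr rfl fun u _ => Finset.sum_congr rfl fun v _ => by ring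
    calc (∑ l, ∑ u, ∑ v, ((lam j : ℂ) * (γ j u v * δ j q p)) *
            ((lam l : ℂ) * (γ l v u * δ l r t)))
        = ∑ l, ((lam j : ℂ) * (lam l : ℂ) * (δ j q p * δ l r t)) *
            ∑ u, ∑ v, γ j u v * γ l v u :=
          Finset.sum_congr rfl fun l _ => step l
      _ = ∑ l, ((lam j : ℂ) * (lam l : ℂ) * (δ j q p * δ l r t)) *
            (if j = l then 1 else 0) :=
          Finset.sum_congr rfl fun l _ => by rw [tr_pair15 γ hγ hoγ]
      _ = ((lam j : ℂ))^2 * (δ j q p * δ j r t) := by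
          simp only [mul_ite, mul_one, mul_zero, Finset.sum_ite_eq, Finset.mem_univ,
            if_true]
          ring
  ext x y
  simp only [Cmap15, kroneckerMap_apply, Matrix.smul_apply, smul_eq_mul, hF]
  calc (∑ p, ∑ q, (γ i x.1 y.1 * δ i p q) *
          ∑ j, ((lam j : ℂ))^2 * (δ j q p * δ j x.2 y.2))
      = ∑ p, ∑ q, ∑ j, (γ i x.1 y.1 * δ i p q) *
          (((lam j : ℂ))^2 * (δ j q p * δ j x.2 y.2)) := by
        simp only [Finset.mul_sum]
    _ = ∑ j, ∑ p, ∑ q, (γ i x.1 y.1 * δ i p q) *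
          (((lam j : ℂ))^2 * (δ j q p * δ j x.2 y.2)) := by
        exact (Finset.sum_congr rfl fun p _ => Finset.sum_comm).trans Finset.sum_comm
    _ = ∑ j, (((lam j : ℂ))^2 * (γ i x.1 y.1 * δ j x.2 y.2)) *
          (∑ p, ∑ q, δ i p q * δ j q p) := by
        refine Finset.sum_congr rfl fun j _ => ?_
        simp only [Finset.mul_sum]
        exact Finset.sum_congr rfl fun p _ => Finset.sum_congr rfl fun q _ => by ring
    _ = ∑ j, (((lam j : ℂ))^2 * (γ i x.1 y.1 * δ j x.2 y.2)) *
          (if i = j then 1 else 0) :=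
        Finset.sum_congr rfl fun j _ => by rw [tr_pair15 δ hδ hoδ]
    _ = ((lam i : ℂ))^2 * (γ i x.1 y.1 * δ i x.2 y.2) := by
        simp only [mul_ite, mul_one, mul_zero, Finset.sum_ite_eq, Finset.mem_univ, if_true]

lemma cmap_sum_smul15 {k m n : ℕ} (A : Matrix (Fin k × Fin m) (Fin k × Fin m) ℂ)
    (c : Fin n → ℂ) (B : Fin n → Matrix (Fin k × Fin m) (Fin k × Fin m) ℂ) :
    Cmap15 A (∑ i, c i • B i) = ∑ i, c i • Cmap15 A (B i) := by
  ext x y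
  simp only [Cmap15, Matrix.sum_apply, Matrix.smul_apply, smul_eq_mul]
  set F : Fin m → Fin m → ℂ :=
    fun p q => ∑ u, ∑ v, A (u, q) (v, p) * A (v, x.2) (u, y.2) with hFdef
  calc (∑ p, ∑ q, (∑ i, c i * B i (x.1, p) (y.1, q)) * F p q)
      = ∑ p, ∑ q, ∑ i, c i * (B i (x.1, p) (y.1, q) * F p q) := by
        refine Finset.sum_congr rfl fun p _ => Finset.sum_congr rfl fun q _ => ?_
        rw [Finset.sum_mul]
        exact Finset.sum_congr rfl fun i _ => by ring
    _ = ∑ i, ∑ p, ∑ q, c i * (B i (x.1, p) (y.1, q) * F p q) :=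
        (Finset.sum_congr rfl fun p _ => Finset.sum_comm).trans Finset.sum_comm
    _ = ∑ i, c i * ∑ p, ∑ q, B i (x.1, p) (y.1, q) * F p q := by
        refine Finset.sum_congr rfl fun i _ => ?_
        simp only [Finset.mul_sum]

lemma qf_sum15 {J : Type*} [Fintype J] {ι' : Type*} (s : Finset ι')
    (M : ι' → Matrix J J ℂ) (x : J → ℂ) :
    star x ⬝ᵥ ((∑ i ∈ s, M i) *ᵥ x) = ∑ i ∈ s, star x ⬝ᵥ (M i *ᵥ x) := by
  simp only [dotProduct, Matrix.mulVec, Matrix.sum_apply, Finset.sum_mul,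
    Finset.mul_sum, Pi.star_apply]
  exact (Finset.sum_congr rfl fun r _ => Finset.sum_comm).trans Finset.sum_comm

lemma qf_smul15 {J : Type*} [Fintype J] (c : ℂ) (M : Matrix J J ℂ) (x : J → ℂ) :
    star x ⬝ᵥ ((c • M) *ᵥ x) = c * (star x ⬝ᵥ (M *ᵥ x)) := by
  rw [Matrix.smul_mulVec, dotProduct_smul, smul_eq_mul]

lemma qf_star15 {J : Type*} [Fintype J] {M : Matrix J J ℂ} (hM : M.IsHermitian)
    (x : J → ℂ) : star (star x ⬝ᵥ (M *ᵥ x)) = star x ⬝ᵥ (M *ᵥ x) := by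
  have hM' : ∀ r c, star (M r c) = M c r := by
    intro r c
    conv_rhs => rw [← hM]
    simp [conjTranspose_apply]
  simp only [dotProduct, Matrix.mulVec, Pi.star_apply, star_sum, star_mul', star_star,
    Finset.sum_mul, Finset.mul_sum, hM']
  refine Finset.sum_comm.trans ?_
  exact Finset.sum_congr rfl fun a _ => Finset.sum_congr rfl fun b _ => by ring

end Aux

/-- The sum of the terms of maximal Schmidt coefficient of a PSD matrix is PSD. -/
theorem stmt15 {k m n : ℕ} (A : Matrix (Fin k × Fin m) (Fin k × Fin m) ℂ)
    (hA : A.PosSemidef) (s : ℕ) (hs1 : 1 ≤ s) (hsn : s ≤ n)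
    (lam : Fin n → ℝ) (γ : Fin n → Matrix (Fin k) (Fin k) ℂ)
    (δ : Fin n → Matrix (Fin m) (Fin m) ℂ)
    (hpos : ∀ i, 0 < lam i)
    (hmono : ∀ i j : Fin n, i ≤ j → lam j ≤ lam i)
    (hconst : ∀ i j : Fin n, (i : ℕ) < s → (j : ℕ) < s → lam i = lam j)
    (hgap : ∀ i j : Fin n, (i : ℕ) < s → s ≤ (j : ℕ) → lam j < lam i)
    (hγ : ∀ i, (γ i).IsHermitian) (hδ : ∀ i, (δ i).IsHermitian)
    (hoγ : ∀ i j, Matrix.trace (γ i * (γ j)ᴴ) = if i = j then 1 else 0)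
    (hoδ : ∀ i j, Matrix.trace (δ i * (δ j)ᴴ) = if i = j then 1 else 0)
    (hdec : A = ∑ i, (lam i : ℂ) • (γ i ⊗ₖ δ i)) :
    (∑ i ∈ Finset.univ.filter (fun i : Fin n => (i : ℕ) < s), γ i ⊗ₖ δ i).PosSemidef := by
  classical
  have hkr : ∀ i, (γ i ⊗ₖ δ i).IsHermitian := fun i => by
    show (γ i ⊗ₖ δ i)ᴴ = γ i ⊗ₖ δ i
    rw [kronecker_conjTranspose15, (hγ i).eq, (hδ i).eq]
  -- the iterates
  set Dp : ℕ → Matrix (Fin k × Fin m) (Fin k × Fin m) ℂ :=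
    fun p => ∑ i, ((lam i : ℂ))^(2*p+1) • (γ i ⊗ₖ δ i) with hDpdef
  have hDpsd : ∀ p, (Dp p).PosSemidef := by
    intro p
    induction p with
    | zero =>
      have h0 : Dp 0 = A := by
        rw [hdec]
        show (∑ i, ((lam i : ℂ))^(2*0+1) • (γ i ⊗ₖ δ i)) = _
        exact Finset.sum_congr rfl fun i _ => by norm_num
      exact h0 ▸ hA
    | succ p ih =>
      have : Dp (p+1) = Cmap15 A (Dp p) := by
        rw [hDpdef]
        simp only
        rw [cmap_sum_smul15]
        refine Finset.sum_congr rfl fun i _ => ?_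
        rw [cmap_eigen15 A lam γ δ hγ hδ hoγ hoδ hdec i, smul_smul, ← pow_add]
        congr 2 <;> omega
      rw [this]
      exact cmap_posSemidef15 hA ih
  -- Hermitian part of the goal
  refine posSemidef_iff_dotProduct_mulVec.mpr ⟨?_, ?_⟩
  · show _ = _
    rw [Matrix.conjTranspose_sum]
    exact Finset.sum_congr rfl fun i _ => hkr i
  -- quadratic form part
  intro x
  set T : Fin n → ℂ := fun i => star x ⬝ᵥ ((γ i ⊗ₖ δ i) *ᵥ x) with hT
  have hTstar : ∀ i, star (T i) = T i := fun i => qf_star15 (hkr i) x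
  have hTim : ∀ i, (T i).im = 0 := by
    intro i
    have := hTstar i
    rw [Complex.star_def, Complex.conj_eq_iff_im] at this
    exact this
  -- nonnegativity of the iterates' quadratic forms
  have hfp : ∀ p, 0 ≤ ∑ i, (lam i)^(2*p+1) * (T i).re := by
    intro p
    have h0 := (posSemidef_iff_dotProduct_mulVec.mp (hDpsd p)).2 x
    rw [hDpdef] at h0
    rw [qf_sum15] at h0
    have hre := (Complex.nonneg_iff.mp h0).1
    rw [Complex.re_sum] at hre
    convert hre using 1
    refine Finset.sum_congr rfl fun i _ => ?_
    rw [qf_smul15, show ((lam i : ℂ))^(2*p+1) = ((((lam i)^(2*p+1) : ℝ)) : ℂ) by push_cast; ring,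
      Complex.re_ofReal_mul]
  -- the index with maximal coefficient
  have hn : 0 < n := lt_of_lt_of_le hs1 hsn
  set j₀ : Fin n := ⟨0, hn⟩ with hj₀
  have hj₀s : (j₀ : ℕ) < s := hs1
  have hc : 0 < lam j₀ := hpos j₀
  set S : ℝ := ∑ i ∈ Finset.univ.filter (fun i : Fin n => (i : ℕ) < s), (T i).re with hS
  have hg : ∀ p, 0 ≤ ∑ i, (lam i / lam j₀)^(2*p+1) * (T i).re := by
    intro p
    have : (∑ i, (lam i / lam j₀)^(2*p+1) * (T i).re)
        = (∑ i, (lam i)^(2*p+1) * (T i).re) * ((lam j₀)^(2*p+1))⁻¹ := by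
      rw [Finset.sum_mul]
      refine Finset.sum_congr rfl fun i _ => ?_
      rw [div_pow]
      ring
    rw [this]
    exact mul_nonneg (hfp p) (inv_nonneg.mpr (pow_nonneg hc.le _))
  have htend : Filter.Tendsto (fun p => ∑ i, (lam i / lam j₀)^(2*p+1) * (T i).re)
      Filter.atTop (nhds S) := by
    have hSalt : S = ∑ i : Fin n, (if (i : ℕ) < s then (T i).re else 0) := by
      rw [hS, Finset.sum_filter]
    rw [hSalt]
    refine tendsto_finset_sum _ fun i _ => ?_
    by_cases hi : (i : ℕ) < s
    · have h1 : lam i / lam j₀ = 1 := by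
        rw [hconst i j₀ hi hj₀s]; exact div_self hc.ne'
      simp [h1, hi]
    · have hlt : lam i < lam j₀ := hgap j₀ i hj₀s (le_of_not_gt hi)
      have hr0 : 0 ≤ lam i / lam j₀ := div_nonneg (hpos i).le hc.le
      have hr1 : lam i / lam j₀ < 1 := (div_lt_one hc).mpr hlt
      simp only [hi, if_false]
      have hbase : Filter.Tendsto (fun q : ℕ => (lam i / lam j₀)^q) Filter.atTop (nhds 0) :=
        tendsto_pow_atTop_nhds_zero_of_lt_one hr0 hr1
      have hcomp : Filter.Tendsto (fun p : ℕ => (2*p+1)) Filter.atTop Filter.atTop :=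
        Filter.tendsto_atTop_atTop_of_monotone (fun a b h => by omega) (fun b => ⟨b, by omega⟩)
      have := (hbase.comp hcomp).mul_const ((T i).re)
      simpa using this
  have hS0 : 0 ≤ S := ge_of_tendsto' htend hg
  -- conclude
  rw [qf_sum15]
  rw [Complex.nonneg_iff]
  constructor
  · rw [Complex.re_sum]
    exact hS0
  · rw [Complex.im_sum]
    exact (Finset.sum_eq_zero fun i _ => hTim i).symm
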